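/- arXiv:1307.1873 — 3 statements merged into one kernel-verified Lean document; each statement's English description precedes it below -/
import Mathlib

section
/- For fixed t > 0, the explicit rarefaction wave solution \tilde{\rho}_j(t) = (\sum_{k=0}^{j-1} t^k/k!)/(\sum_{k=0}^{j} t^k/k!) is strictly increasing in j \geq 1, i.e. \tilde{\rho}_{j+1}(t) > \tilde{\rho}_j(t). -/
open scoped BigOperators

/-- Partial exponential sum `q_j(t) = ∑_{k=0}^{j-1} t^k/k!`. -/
noncomputable def q (j : ℕ) (t : ℝ) : ℝ :=
  ∑ k ∈ Finset.range j, t ^ k / (Nat.factorial k : ℝ)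

/-- The explicit rarefaction wave `ρ_j = q_j / q_{j+1}`. -/
noncomputable def rarefaction (j : ℕ) (t : ℝ) : ℝ := q j t / q (j + 1) t

lemma q_pos {t : ℝ} (ht : 0 < t) {j : ℕ} (hj : 1 ≤ j) : 0 < q j t := by
  apply Finset.sum_pos
  · intro k _
    positivity
  · exact Finset.nonempty_range_iff.mpr (by omega)

lemma q_key {t : ℝ} (ht : 0 < t) (j : ℕ) :
    t / (j + 1) * q j t < q (j + 1) t := by
  have h1 : q (j + 1) t = (∑ k ∈ Finset.range j, t ^ (k + 1) / (Nat.factorial (k + 1) : ℝ)) + 1 := by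
    rw [q, Finset.sum_range_succ']
    simp
  have h2 : t / (j + 1) * q j t
      = ∑ k ∈ Finset.range j, t / (j + 1) * (t ^ k / (Nat.factorial k : ℝ)) := by
    rw [q, Finset.mul_sum]
  rw [h1, h2]
  have h3 : ∀ k ∈ Finset.range j,
      t / (j + 1) * (t ^ k / (Nat.factorial k : ℝ)) ≤ t ^ (k + 1) / (Nat.factorial (k + 1) : ℝ) := by
    intro k hk
    have hkj : (k : ℕ) < j := Finset.mem_range.mp hk
    have hfac : (Nat.factorial (k + 1) : ℝ) = (k + 1) * (Nat.factorial k : ℝ) := by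
      push_cast [Nat.factorial_succ]; ring
    have hkfac : (0 : ℝ) < (Nat.factorial k : ℝ) := by positivity
    rw [hfac]
    rw [div_mul_div_comm, ← pow_succ']
    apply div_le_div_of_nonneg_left (by positivity) (by positivity)
    have : (k : ℝ) + 1 ≤ (j : ℝ) + 1 := by
      have : (k : ℝ) ≤ (j : ℝ) := Nat.cast_le.mpr hkj.le
      linarith
    nlinarith
  have := Finset.sum_le_sum h3
  linarith

theorem rarefaction_strictly_increasing_in_j (t : ℝ) (ht : 0 < t) (j : ℕ) (hj : 1 ≤ j) :
    rarefaction j t < rarefaction (j + 1) t := by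
  have h1 : 0 < q (j + 1) t := q_pos ht (by omega)
  have h2 : 0 < q (j + 2) t := q_pos ht (by omega)
  have h0 : 0 < q j t := q_pos ht hj
  rw [rarefaction, rarefaction, div_lt_div_iff₀ h1 (by exact_mod_cast h2)]
  have e1 : q (j + 1) t = q j t + t ^ j / (Nat.factorial j : ℝ) := by
    rw [q, Finset.sum_range_succ]; rfl
  have e2 : q (j + 2) t = q (j + 1) t + t ^ (j + 1) / (Nat.factorial (j + 1) : ℝ) := by
    rw [show j + 2 = (j + 1) + 1 from rfl, q, Finset.sum_range_succ]; rfl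
  -- key: a_{j+1} * q j < a_j * q (j+1)
  have hk := q_key ht j
  have hfac : (Nat.factorial (j + 1) : ℝ) = ((j : ℝ) + 1) * (Nat.factorial j : ℝ) := by
    push_cast [Nat.factorial_succ]; ring
  have hjfac : (0 : ℝ) < (Nat.factorial j : ℝ) := by positivity
  have key : t ^ (j + 1) / (Nat.factorial (j + 1) : ℝ) * q j t
      < t ^ j / (Nat.factorial j : ℝ) * q (j + 1) t := by
    have : t ^ (j + 1) / (Nat.factorial (j + 1) : ℝ)
        = t ^ j / (Nat.factorial j : ℝ) * (t / ((j : ℝ) + 1)) := by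
      rw [hfac, pow_succ]; field_simp
    rw [this]
    have hp : 0 < t ^ j / (Nat.factorial j : ℝ) := by positivity
    calc t ^ j / (Nat.factorial j : ℝ) * (t / ((j : ℝ) + 1)) * q j t
        = t ^ j / (Nat.factorial j : ℝ) * (t / ((j : ℝ) + 1) * q j t) := by ring
      _ < t ^ j / (Nat.factorial j : ℝ) * q (j + 1) t := by
          exact mul_lt_mul_of_pos_left hk hp
  nlinarith [sq_nonneg (q (j + 1) t)]
end

section
/- With \tilde{\gamma}_j(t) = -\int_0^t (\tilde{\rho}_j(s) - \tilde{\rho}_{j-1}(s)) ds as above, if \epsilon t \leq 1 then |\tilde{\gamma}_j(t)| \leq (1/8)\log(1 + \epsilon t / j) \leq \epsilon t/(8j) for all j \geq 1. -/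
open scoped BigOperators

/-- The scaled rarefaction wave with amplitude `ε/8`. -/
noncomputable def scaledRarefaction (ε : ℝ) (j : ℕ) (t : ℝ) : ℝ :=
  if j = 0 then 0 else
    (ε / 8) * (∑ k ∈ Finset.range j, (ε * t) ^ k / (Nat.factorial k : ℝ)) /
      (∑ k ∈ Finset.range (j + 1), (ε * t) ^ k / (Nat.factorial k : ℝ))

/-- `γ̃_j(t) = -∫_0^t (ρ̃_j(s) - ρ̃_{j-1}(s)) ds`. -/
noncomputable def gammaTilde (ε : ℝ) (j : ℕ) (t : ℝ) : ℝ :=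
  -∫ s in (0:ℝ)..t, (scaledRarefaction ε j s - scaledRarefaction ε (j - 1) s)

noncomputable def Pn (ε : ℝ) (n : ℕ) (t : ℝ) : ℝ :=
  ∑ k ∈ Finset.range n, (ε * t) ^ k / (Nat.factorial k : ℝ)

lemma Pn_one_le (ε : ℝ) (n : ℕ) (t : ℝ) (h : 0 ≤ ε * t) : 1 ≤ Pn ε (n + 1) t := by
  unfold Pn
  rw [Finset.sum_range_succ']
  simp only [pow_zero, Nat.factorial_zero, Nat.cast_one, div_one]
  have : 0 ≤ ∑ k ∈ Finset.range n, (ε * t) ^ (k + 1) / (Nat.factorial (k + 1) : ℝ) := by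
    apply Finset.sum_nonneg
    intro k _
    positivity
  linarith

lemma Pn_pos (ε : ℝ) (n : ℕ) (t : ℝ) (h : 0 ≤ ε * t) : 0 < Pn ε (n + 1) t := by
  linarith [Pn_one_le ε n t h]

lemma Pn_continuous (ε : ℝ) (n : ℕ) : Continuous (fun t => Pn ε n t) := by
  unfold Pn
  exact continuous_finset_sum _ fun k _ => ((continuous_const.mul continuous_id).pow k).div_const _

lemma Pn_hasDerivAt (ε : ℝ) (n : ℕ) (s : ℝ) :
    HasDerivAt (fun u => Pn ε (n + 1) u) (ε * Pn ε n s) s := by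
  have h : ∀ k ∈ Finset.range (n + 1),
      HasDerivAt (fun u => (ε * u) ^ k / (Nat.factorial k : ℝ))
        ((k : ℝ) * (ε * s) ^ (k - 1) * ε / (Nat.factorial k : ℝ)) s := by
    intro k _
    simpa using (((hasDerivAt_id s).const_mul ε).pow k).div_const (Nat.factorial k : ℝ)
  have h2 := HasDerivAt.fun_sum h
  refine h2.congr_deriv ?_
  symm
  unfold Pn
  rw [Finset.sum_range_succ', Finset.mul_sum]
  simp only [Nat.cast_zero, zero_mul, pow_zero, Nat.factorial_zero, Nat.cast_one, zero_div,
    add_zero, Nat.add_sub_cancel]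
  apply Finset.sum_congr rfl
  intro k _
  have hk : (Nat.factorial k : ℝ) ≠ 0 := by positivity
  rw [Nat.factorial_succ]
  push_cast
  field_simp

lemma integral_scaled (ε : ℝ) (hε : 0 < ε) (n : ℕ) (t : ℝ) (ht : 0 ≤ t) :
    ∫ s in (0:ℝ)..t, scaledRarefaction ε n s = (1 / 8) * Real.log (Pn ε (n + 1) t) := by
  rcases n with _ | m
  · simp [scaledRarefaction, Pn]
  · have hne : m + 1 ≠ 0 := by omega
    have hsr : ∀ s : ℝ, scaledRarefaction ε (m + 1) s
        = (ε / 8) * Pn ε (m + 1) s / Pn ε (m + 2) s := by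
      intro s; simp [scaledRarefaction, Pn]
    have hpos : ∀ s ∈ Set.uIcc (0:ℝ) t, 0 < Pn ε (m + 2) s := by
      intro s hs
      rw [Set.uIcc_of_le ht] at hs
      exact Pn_pos ε (m + 1) s (mul_nonneg hε.le hs.1)
    have hderiv : ∀ s ∈ Set.uIcc (0:ℝ) t,
        HasDerivAt (fun u => (1/8 : ℝ) * Real.log (Pn ε (m + 2) u))
          (scaledRarefaction ε (m + 1) s) s := by
      intro s hs
      have h1 := (Pn_hasDerivAt ε (m + 1) s).log (hpos s hs).ne'
      have h2 := h1.const_mul (1/8 : ℝ)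
      refine h2.congr_deriv ?_
      rw [hsr s]
      ring
    have hint : IntervalIntegrable (fun s => scaledRarefaction ε (m + 1) s)
        MeasureTheory.volume 0 t := by
      apply ContinuousOn.intervalIntegrable
      have : ContinuousOn (fun s => (ε / 8) * Pn ε (m + 1) s / Pn ε (m + 2) s)
          (Set.uIcc (0:ℝ) t) :=
        ContinuousOn.div ((continuous_const.mul (Pn_continuous ε (m+1))).continuousOn)
          (Pn_continuous ε (m+2)).continuousOn (fun s hs => (hpos s hs).ne')
      exact this.congr fun s _ => hsr s
    rw [intervalIntegral.integral_eq_sub_of_hasDerivAt hderiv hint]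
    have hP0 : Pn ε (m + 2) 0 = 1 := by
      unfold Pn
      rw [Finset.sum_range_succ']
      simp
    rw [hP0]
    simp

theorem gamma_bound (ε : ℝ) (hε : 0 < ε) (j : ℕ) (hj : 1 ≤ j)
    (t : ℝ) (ht : 0 ≤ t) (hts : ε * t ≤ 1) :
    |gammaTilde ε j t| ≤ (1 / 8) * Real.log (1 + ε * t / (j : ℝ)) ∧
      (1 / 8) * Real.log (1 + ε * t / (j : ℝ)) ≤ ε * t / (8 * (j : ℝ)) := by
  obtain ⟨m, rfl⟩ : ∃ m, j = m + 1 := ⟨j - 1, by omega⟩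
  set x := ε * t with hx
  have hx0 : 0 ≤ x := mul_nonneg hε.le ht
  have hjpos : (0:ℝ) < (m + 1 : ℕ) := by positivity
  -- integrability bits
  have hint : ∀ n : ℕ, IntervalIntegrable (fun s => scaledRarefaction ε n s)
      MeasureTheory.volume 0 t := by
    intro n
    rcases n with _ | k
    · simp [scaledRarefaction]
    · apply ContinuousOn.intervalIntegrable
      have hpos : ∀ s ∈ Set.uIcc (0:ℝ) t, 0 < Pn ε (k + 2) s := by
        intro s hs
        rw [Set.uIcc_of_le ht] at hs
        exact Pn_pos ε (k + 1) s (mul_nonneg hε.le hs.1)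
      have : ContinuousOn (fun s => (ε / 8) * Pn ε (k + 1) s / Pn ε (k + 2) s)
          (Set.uIcc (0:ℝ) t) :=
        ContinuousOn.div ((continuous_const.mul (Pn_continuous ε (k+1))).continuousOn)
          (Pn_continuous ε (k+2)).continuousOn (fun s hs => (hpos s hs).ne')
      exact this.congr fun s _ => by simp [scaledRarefaction, Pn]
  have hgamma : gammaTilde ε (m + 1) t
      = (1/8) * Real.log (Pn ε (m + 1) t) - (1/8) * Real.log (Pn ε (m + 2) t) := by
    unfold gammaTilde
    simp only [Nat.add_sub_cancel]
    rw [intervalIntegral.integral_sub (hint (m+1)) (hint m)]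
    have h1 := integral_scaled ε hε (m + 1) t ht
    have h2 := integral_scaled ε hε m t ht
    rw [h1, h2]
    ring
  have hP1pos : 0 < Pn ε (m + 1) t := Pn_pos ε m t hx0
  have hP2pos : 0 < Pn ε (m + 2) t := Pn_pos ε (m + 1) t hx0
  have hP2eq : Pn ε (m + 2) t = Pn ε (m + 1) t + x ^ (m + 1) / (Nat.factorial (m + 1) : ℝ) := by
    unfold Pn
    rw [Finset.sum_range_succ]
  have hterm : x ^ m / (Nat.factorial m : ℝ) ≤ Pn ε (m + 1) t := by
    unfold Pn
    exact Finset.single_le_sum (f := fun k => x ^ k / (Nat.factorial k : ℝ))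
      (fun k _ => by positivity) (Finset.self_mem_range_succ m)
  have hratio : Pn ε (m + 2) t ≤ (1 + x / (m + 1 : ℕ)) * Pn ε (m + 1) t := by
    rw [hP2eq]
    have h1 : x ^ (m + 1) / (Nat.factorial (m + 1) : ℝ)
        = (x / (m + 1 : ℕ)) * (x ^ m / (Nat.factorial m : ℝ)) := by
      rw [Nat.factorial_succ, pow_succ]
      push_cast
      have h2 : (Nat.factorial m : ℝ) ≠ 0 := by positivity
      field_simp
    have h3 : (x / (m + 1 : ℕ)) * (x ^ m / (Nat.factorial m : ℝ))
        ≤ (x / (m + 1 : ℕ)) * Pn ε (m + 1) t :=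
      mul_le_mul_of_nonneg_left hterm (by positivity)
    nlinarith [h3, h1]
  have hlog : Real.log (Pn ε (m + 2) t) - Real.log (Pn ε (m + 1) t)
      ≤ Real.log (1 + x / (m + 1 : ℕ)) := by
    have h1 : Real.log (Pn ε (m + 2) t) ≤ Real.log ((1 + x / (m + 1 : ℕ)) * Pn ε (m + 1) t) :=
      Real.log_le_log hP2pos hratio
    rw [Real.log_mul (by positivity) hP1pos.ne'] at h1
    linarith
  have hmono : Pn ε (m + 1) t ≤ Pn ε (m + 2) t := by
    have hnn : 0 ≤ x ^ (m + 1) / (Nat.factorial (m + 1) : ℝ) := by positivity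
    linarith
  have hlogmono : Real.log (Pn ε (m + 1) t) ≤ Real.log (Pn ε (m + 2) t) :=
    Real.log_le_log hP1pos hmono
  constructor
  · rw [hgamma, abs_sub_comm, abs_of_nonneg (by linarith)]
    linarith
  · have hm : (0:ℝ) < (m:ℝ) + 1 := by positivity
    have h1 : Real.log (1 + x / ((m:ℝ) + 1)) ≤ x / ((m:ℝ) + 1) := by
      have := Real.log_le_sub_one_of_pos (x := 1 + x / ((m:ℝ) + 1)) (by positivity)
      linarith
    have h2 : x / (8 * ((m:ℝ) + 1)) = 1 / 8 * (x / ((m:ℝ) + 1)) := by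
      field_simp
    push_cast
    linarith
end

section
/- Define \tilde{\sigma}_j(t) = \tilde{\rho}_j(t) - \tilde{\rho}_{j-1}(t) for the scaled rarefaction wave. Then for all j \geq 1 and all t with \epsilon t \leq 1, one has 0 \leq \tilde{\sigma}_j(t) \leq \epsilon/(8 (j-1)!). -/
open scoped BigOperators

lemma scaledRarefaction_eq (ε : ℝ) (m : ℕ) (t : ℝ) :
    scaledRarefaction ε m t =
      (ε / 8) * (∑ k ∈ Finset.range m, (ε * t) ^ k / (Nat.factorial k : ℝ)) /
      (∑ k ∈ Finset.range (m + 1), (ε * t) ^ k / (Nat.factorial k : ℝ)) := by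
  rcases Nat.eq_zero_or_pos m with h | h
  · subst h; simp [scaledRarefaction]
  · rw [scaledRarefaction, if_neg (Nat.pos_iff_ne_zero.mp h)]

lemma key_ineq (A a b c : ℝ) (hA : 1 ≤ A) (hb0 : 0 ≤ b) (hba : b ≤ a) (hac : a ≤ c) :
    0 ≤ A / (A + b) - (A - a) / A ∧ A / (A + b) - (A - a) / A ≤ c := by
  have hA0 : (0:ℝ) < A := lt_of_lt_of_le one_pos hA
  have hB0 : (0:ℝ) < A + b := by linarith
  have heq : A / (A + b) - (A - a) / A = (A * (a - b) + a * b) / ((A + b) * A) := by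
    field_simp
    ring
  constructor
  · rw [heq]
    apply div_nonneg _ (le_of_lt (mul_pos hB0 hA0))
    nlinarith
  · rw [heq, div_le_iff₀ (mul_pos hB0 hA0)]
    have hc0 : 0 ≤ c := le_trans hb0 (le_trans hba hac)
    nlinarith [mul_nonneg (le_of_lt hA0) hb0,
      mul_nonneg (sub_nonneg.mpr hac) (le_of_lt hB0),
      mul_nonneg (mul_nonneg hc0 (le_of_lt hB0)) (sub_nonneg.mpr hA)]

theorem sigma_bound (ε : ℝ) (hε : 0 < ε) (j : ℕ) (hj : 1 ≤ j)
    (t : ℝ) (ht : 0 ≤ t) (hts : ε * t ≤ 1) :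
    0 ≤ scaledRarefaction ε j t - scaledRarefaction ε (j - 1) t ∧
      scaledRarefaction ε j t - scaledRarefaction ε (j - 1) t ≤
        ε / (8 * (Nat.factorial (j - 1) : ℝ)) := by
  obtain ⟨m, rfl⟩ := Nat.exists_eq_add_of_le hj
  set x : ℝ := ε * t with hx
  have hx0 : 0 ≤ x := mul_nonneg (le_of_lt hε) ht
  have hx1 : x ≤ 1 := hts
  set S : ℕ → ℝ := fun n => ∑ k ∈ Finset.range n, x ^ k / (Nat.factorial k : ℝ) with hS
  have hSsucc : ∀ n, S (n + 1) = S n + x ^ n / (Nat.factorial n : ℝ) := by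
    intro n; simp [hS, Finset.sum_range_succ]
  have hS1 : ∀ n, 1 ≤ S (n + 1) := by
    intro n
    have h0 : (1:ℝ) = x ^ 0 / (Nat.factorial 0 : ℝ) := by norm_num
    rw [h0]
    apply Finset.single_le_sum (f := fun k => x ^ k / (Nat.factorial k : ℝ))
    · intro i _
      exact div_nonneg (pow_nonneg hx0 i) (Nat.cast_nonneg _)
    · simp
  have hjm : 1 + m - 1 = m := by omega
  rw [hjm]
  set a : ℝ := x ^ m / (Nat.factorial m : ℝ) with ha
  set b : ℝ := x ^ (m + 1) / (Nat.factorial (m + 1) : ℝ) with hb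
  have hfacpos : (0:ℝ) < (Nat.factorial m : ℝ) := by
    exact_mod_cast Nat.factorial_pos m
  have hb0 : 0 ≤ b := div_nonneg (pow_nonneg hx0 _) (Nat.cast_nonneg _)
  have hba : b ≤ a := by
    apply div_le_div₀ (pow_nonneg hx0 m)
      (pow_le_pow_of_le_one hx0 hx1 (Nat.le_succ m)) hfacpos
    exact_mod_cast Nat.factorial_le (Nat.le_succ m)
  have hac : a ≤ 1 / (Nat.factorial m : ℝ) := by
    apply div_le_div₀ (by norm_num) (pow_le_one₀ hx0 hx1) hfacpos le_rfl
  have hform1 : scaledRarefaction ε (1 + m) t = (ε / 8) * (S (m + 1) / S (m + 2)) := by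
    rw [show 1 + m = m + 1 by ring, scaledRarefaction_eq]
    rw [mul_div_assoc]
  have hform2 : scaledRarefaction ε m t = (ε / 8) * (S m / S (m + 1)) := by
    rw [scaledRarefaction_eq, mul_div_assoc]
  rw [hform1, hform2, ← mul_sub]
  have hSm : S m = S (m + 1) - a := by rw [hSsucc]; ring
  have hS2 : S (m + 2) = S (m + 1) + b := hSsucc (m + 1)
  rw [hSm, hS2]
  obtain ⟨h1, h2⟩ := key_ineq (S (m + 1)) a b (1 / (Nat.factorial m : ℝ))
    (hS1 m) hb0 hba hac
  constructor
  · exact mul_nonneg (by linarith) h1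
  · calc (ε / 8) * (S (m + 1) / (S (m + 1) + b) - (S (m + 1) - a) / S (m + 1))
        ≤ (ε / 8) * (1 / (Nat.factorial m : ℝ)) := by
          apply mul_le_mul_of_nonneg_left h2 (by linarith)
      _ = ε / (8 * (Nat.factorial m : ℝ)) := by
          field_simp
end
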